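/- Let Γ = (V, E) be a finite simple graph whose complement Γ̄ is connected. Then there exists a linear order < on V such that the shortlex automaton 𝓐 of Γ with respect to <, restricted to its nonempty states, is strongly connected: for any two nonempty cliques s and t of Γ there is a directed path of transitions from s to t. -/

import Mathlib

open Filter

noncomputable section

/-- A transition of the geodesic automaton of a graph `Γ`: from the state `s`
one may read a letter `v ∉ s` and move to the state `{v} ∪ (st(v) ∩ s)`. -/
def geoTrans {V : Type*} (Γ : SimpleGraph V) (s t : Set V) : Prop :=
  ∃ v : V, v ∉ s ∧ t = insert v (Γ.neighborSet v ∩ s)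

/-- A transition of the shortlex automaton of `Γ` with respect to a linear
order `lo` on the vertices: a geodesic transition reading `v` is kept only if
`st(v) ∩ s = ∅` or `v < min (st(v) ∩ s)`, i.e. `v` is smaller than every
element of `st(v) ∩ s`. -/
def slTrans {V : Type*} (Γ : SimpleGraph V) (lo : LinearOrder V) (s t : Set V) : Prop :=
  ∃ v : V, v ∉ s ∧ (∀ w ∈ Γ.neighborSet v ∩ s, lo.lt v w) ∧
    t = insert v (Γ.neighborSet v ∩ s)

namespace ShortlexSC

set_option linter.unusedSectionVars false

variable {V : Type*} [Fintype V] [LinearOrder V]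

/-- The shortlex transition relation w.r.t. the instance order. -/
def sl (Γ : SimpleGraph V) (s t : Set V) : Prop :=
  ∃ v : V, v ∉ s ∧ (∀ w ∈ Γ.neighborSet v ∩ s, v < w) ∧ t = insert v (Γ.neighborSet v ∩ s)

/-- Shortlex transition whose target is inside `W`. -/
def slW (Γ : SimpleGraph V) (W : Finset V) (s t : Set V) : Prop :=
  sl Γ s t ∧ t ⊆ ↑W

lemma sl_clique {Γ : SimpleGraph V} {s t : Set V} (hs : Γ.IsClique s) (h : sl Γ s t) :
    Γ.IsClique t := by
  obtain ⟨v, hv, -, rfl⟩ := h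
  have h1 : Γ.IsClique (Γ.neighborSet v ∩ s) := hs.subset Set.inter_subset_right
  rw [SimpleGraph.isClique_iff] at h1 ⊢
  exact (@Set.pairwise_insert_of_symmetric _ _ _ _ Γ.symm).2 ⟨h1, fun b hb _ => hb.1⟩

lemma sl_nonempty {Γ : SimpleGraph V} {s t : Set V} (h : sl Γ s t) : t.Nonempty := by
  obtain ⟨v, -, -, rfl⟩ := h
  exact ⟨v, Set.mem_insert _ _⟩

lemma rtg_clique {Γ : SimpleGraph V} {W : Finset V} {s t : Set V}
    (h : Relation.ReflTransGen (slW Γ W) s t) (hs : Γ.IsClique s) : Γ.IsClique t := by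
  induction h with
  | refl => exact hs
  | tail _ hstep ih => exact sl_clique ih hstep.1

/-- Build a clique `t` from an "upper part" `r` of it, adding elements downwards. -/
lemma build {Γ : SimpleGraph V} {W : Finset V} {t : Set V} (ht : Γ.IsClique t)
    (htW : t ⊆ ↑W) :
    ∀ n : ℕ, ∀ r : Set V, (t \ r).ncard ≤ n → r ⊆ t →
      (∀ a ∈ r, ∀ b ∈ t, b ∉ r → b < a) →
      Relation.ReflTransGen (slW Γ W) r t := by
  intro n
  induction n with
  | zero =>
    intro r hcard hrt _
    have h0 : (t \ r).ncard = 0 := Nat.le_zero.mp hcard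
    have : t \ r = ∅ := (Set.ncard_eq_zero (Set.toFinite _)).mp h0
    have hsub : t ⊆ r := Set.diff_eq_empty.mp this
    rw [Set.Subset.antisymm hrt hsub]
  | succ n ihn =>
    intro r hcard hrt hlt
    by_cases hsub : t ⊆ r
    · rw [Set.Subset.antisymm hrt hsub]
    · have hne : (t \ r).Nonempty := Set.diff_nonempty.mpr hsub
      obtain ⟨w, hwmem, hwmax⟩ :=
        Set.exists_max_image (t \ r) id (Set.toFinite _) hne
      have hNr : Γ.neighborSet w ∩ r = r := by
        apply Set.Subset.antisymm Set.inter_subset_right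
        intro x hx
        refine ⟨?_, hx⟩
        have hxw : x ≠ w := fun h => hwmem.2 (h ▸ hx)
        exact ht hwmem.1 (hrt hx) (Ne.symm hxw)
      have hstep : slW Γ W r (insert w r) := by
        refine ⟨⟨w, hwmem.2, ?_, by rw [hNr]⟩, ?_⟩
        · intro x hx
          rw [hNr] at hx
          exact hlt x hx w hwmem.1 hwmem.2
        · exact Set.insert_subset (htW hwmem.1) (fun x hx => htW (hrt hx))
      refine Relation.ReflTransGen.head hstep (ihn (insert w r) ?_ ?_ ?_)
      · have hdiff : t \ insert w r = (t \ r) \ {w} := by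
          ext x
          simp only [Set.mem_diff, Set.mem_insert_iff, Set.mem_singleton_iff]
          tauto
        have hlt' : ((t \ r) \ {w}).ncard < (t \ r).ncard :=
          Set.ncard_diff_singleton_lt_of_mem hwmem (Set.toFinite _)
        rw [hdiff]
        omega
      · exact Set.insert_subset hwmem.1 hrt
      · intro a ha b hb hbr
        rcases Set.mem_insert_iff.mp ha with h | ha
        · rw [h]
          exact lt_of_le_of_ne
            (hwmax b ⟨hb, fun hh => hbr (Set.mem_insert_of_mem _ hh)⟩)
            (fun hh => hbr (Set.mem_insert_iff.mpr (Or.inl hh)))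
        · exact hlt a ha b hb (fun hh => hbr (Set.mem_insert_of_mem _ hh))

lemma lift_step {Γ : SimpleGraph V} {T : V} {B B' : Set V} (h : sl Γ B B')
    (hlt : ∀ x ∈ B', x < T) :
    sl Γ (insert T B) (insert T B') ∨ sl Γ (insert T B) B' := by
  obtain ⟨v, hv, hcond, rfl⟩ := h
  have hvT : v < T := hlt v (Set.mem_insert _ _)
  have hvmem : v ∉ insert T B := by
    simp only [Set.mem_insert_iff]
    push_neg
    exact ⟨hvT.ne, hv⟩
  by_cases hAdj : Γ.Adj v T
  · left
    refine ⟨v, hvmem, ?_, ?_⟩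
    · intro w hw
      rcases hw.2 with rfl | hwB
      · exact hvT
      · exact hcond w ⟨hw.1, hwB⟩
    · have hTN : T ∈ Γ.neighborSet v := hAdj
      rw [Set.inter_insert_of_mem hTN, Set.insert_comm]
  · right
    refine ⟨v, hvmem, ?_, ?_⟩
    · intro w hw
      rcases hw.2 with rfl | hwB
      · exact absurd hw.1 hAdj
      · exact hcond w ⟨hw.1, hwB⟩
    · have hTN : T ∉ Γ.neighborSet v := hAdj
      rw [Set.inter_insert_of_notMem hTN]

lemma lift {Γ : SimpleGraph V} {T : V} {W W' : Finset V}
    (hW' : ∀ x : V, x ∈ W' → x < T) (hTW : T ∈ W) (hsub : W' ⊆ W)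
    {A B : Set V} (h : Relation.ReflTransGen (slW Γ W') A B) :
    Relation.ReflTransGen (slW Γ W) (insert T A) (insert T B) ∨
      ∃ C : Set V, C.Nonempty ∧ C ⊆ ↑W' ∧
        Relation.ReflTransGen (slW Γ W) (insert T A) C := by
  induction h with
  | refl => exact Or.inl Relation.ReflTransGen.refl
  | @tail B B' hAB hstep ih =>
    rcases ih with ih | ih
    · have hltB' : ∀ x ∈ B', x < T := fun x hx => hW' x (hstep.2 hx)
      rcases lift_step hstep.1 hltB' with hst | hst
      · left
        refine ih.tail ⟨hst, ?_⟩
        exact Set.insert_subset (Finset.mem_coe.2 hTW) (fun x hx => hsub (hstep.2 hx))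
      · right
        exact ⟨B', sl_nonempty hstep.1, hstep.2,
          ih.tail ⟨hst, fun x hx => hsub (hstep.2 hx)⟩⟩
    · exact Or.inr ih

/-- The key hypothesis on the order: every non-minimal vertex has a smaller
non-neighbour. -/
def OrdOK (Γ : SimpleGraph V) : Prop :=
  ∀ v : V, (∃ w : V, w < v) → ∃ u : V, u < v ∧ ¬Γ.Adj u v ∧ u ≠ v

lemma main {Γ : SimpleGraph V} (hord : OrdOK Γ) :
    ∀ W : Finset V, (∀ a b : V, a ≤ b → b ∈ W → a ∈ W) →
      ∀ s t : Set V, Γ.IsClique s → s.Nonempty → Γ.IsClique t → t.Nonempty →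
        s ⊆ ↑W → t ⊆ ↑W → Relation.ReflTransGen (slW Γ W) s t := by
  intro W
  induction W using Finset.strongInduction with
  | _ W ih =>
    intro hdc s t hs hsne ht htne hsW htW
    have hWne : W.Nonempty := ⟨hsne.choose, hsW hsne.choose_spec⟩
    set T := W.max' hWne with hT
    have hTW : T ∈ W := W.max'_mem hWne
    by_cases hsing : ∀ x ∈ W, x = T
    · have hsT : s = {T} := hsne.subset_singleton_iff.mp (fun x hx => hsing x (hsW hx))
      have htT : t = {T} := htne.subset_singleton_iff.mp (fun x hx => hsing x (htW hx))
      rw [hsT, htT]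
    · push_neg at hsing
      obtain ⟨w₀, hw₀W, hw₀ne⟩ := hsing
      have hw₀lt : w₀ < T := lt_of_le_of_ne (W.le_max' _ hw₀W) hw₀ne
      obtain ⟨u, huT, hunadj, hune⟩ := hord T ⟨w₀, hw₀lt⟩
      have huW : u ∈ W := hdc u T huT.le hTW
      set W' := W.erase T with hW'
      have huW' : u ∈ W' := Finset.mem_erase.2 ⟨hune, huW⟩
      have hW'W : W' ⊆ W := Finset.erase_subset _ _
      have hW'ss : W' ⊂ W := Finset.erase_ssubset hTW
      have hW'lt : ∀ x : V, x ∈ W' → x < T := by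
        intro x hx
        rcases Finset.mem_erase.mp hx with ⟨hxne, hxW⟩
        exact lt_of_le_of_ne (W.le_max' _ hxW) hxne
      have hdc' : ∀ a b : V, a ≤ b → b ∈ W' → a ∈ W' := by
        intro a b hab hb
        rcases Finset.mem_erase.mp hb with ⟨hbne, hbW⟩
        have hbT : b < T := lt_of_le_of_ne (W.le_max' _ hbW) hbne
        exact Finset.mem_erase.2 ⟨(lt_of_le_of_lt hab hbT).ne, hdc a b hab hbW⟩
      have hucl : Γ.IsClique {u} := Γ.isClique_singleton u
      have huset : ({u} : Set V) ⊆ ↑W' := Set.singleton_subset_iff.2 (Finset.mem_coe.2 huW')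
      -- Escape: reach a nonempty clique inside W'
      obtain ⟨s₀, hs₀ne, hs₀cl, hs₀W', hreach⟩ :
          ∃ s₀ : Set V, s₀.Nonempty ∧ Γ.IsClique s₀ ∧ s₀ ⊆ ↑W' ∧
            Relation.ReflTransGen (slW Γ W) s s₀ := by
        by_cases hTs : T ∈ s
        · have hNu : Γ.neighborSet u ∩ ({T} : Set V) = ∅ := by
            ext x
            simp only [Set.mem_inter_iff, Set.mem_singleton_iff, Set.mem_empty_iff_false,
              iff_false, not_and]
            rintro hx rfl
            exact hunadj hx
          by_cases hsT : s = {T}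
          · refine ⟨{u}, ⟨u, rfl⟩, hucl, huset,
              Relation.ReflTransGen.single ⟨⟨u, ?_, ?_, ?_⟩, ?_⟩⟩
            · rw [hsT]; simpa using hune
            · intro w hw
              rw [hsT, hNu] at hw
              exact absurd hw (Set.notMem_empty w)
            · rw [hsT, hNu]
              exact (LawfulSingleton.insert_empty_eq u).symm
            · exact fun x hx => (Finset.coe_subset.mpr hW'W) (huset hx)
          · set A := s \ {T} with hA
            have hAne : A.Nonempty := by
              by_contra hcon
              rw [Set.not_nonempty_iff_eq_empty] at hcon
              apply hsT
              apply hsne.subset_singleton_iff.mp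
              intro x hx
              by_contra hxT
              have hxA : x ∈ A := ⟨hx, hxT⟩
              rw [hcon] at hxA
              exact hxA
            have hAcl : Γ.IsClique A := hs.subset Set.diff_subset
            have hAW' : A ⊆ ↑W' := by
              intro x hx
              exact Finset.mem_coe.2 (Finset.mem_erase.2
                ⟨fun h => hx.2 (h ▸ rfl), Finset.mem_coe.1 (hsW hx.1)⟩)
            have h1 : Relation.ReflTransGen (slW Γ W') A {u} :=
              ih W' hW'ss hdc' A {u} hAcl hAne hucl ⟨u, rfl⟩ hAW' huset
            have hins : insert T A = s := by
              rw [hA, Set.insert_diff_singleton, Set.insert_eq_self.2 hTs]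
            rcases lift hW'lt hTW hW'W h1 with h2 | ⟨C, hCne, hCW', h2⟩
            · exfalso
              rw [hins] at h2
              have hclique : Γ.IsClique (insert T ({u} : Set V)) := rtg_clique h2 hs
              have : Γ.Adj T u :=
                hclique (Set.mem_insert _ _) (Set.mem_insert_of_mem _ rfl) (Ne.symm hune)
              exact hunadj (Γ.adj_symm this)
            · rw [hins] at h2
              exact ⟨C, hCne, rtg_clique h2 hs, hCW', h2⟩
        · exact ⟨s, hsne, hs, fun x hx =>
            Finset.mem_coe.2 (Finset.mem_erase.2
              ⟨fun h => hTs (h ▸ hx), Finset.mem_coe.1 (hsW hx)⟩),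
            Relation.ReflTransGen.refl⟩
      -- Now go to t
      have hmono : ∀ {a b : Set V}, Relation.ReflTransGen (slW Γ W') a b →
          Relation.ReflTransGen (slW Γ W) a b := fun hab =>
        Relation.ReflTransGen.mono (fun x y hxy => ⟨hxy.1, fun z hz => hW'W (hxy.2 hz)⟩) _ _ hab
      by_cases hTt : T ∈ t
      · have h1 : Relation.ReflTransGen (slW Γ W') s₀ {u} :=
          ih W' hW'ss hdc' s₀ {u} hs₀cl hs₀ne hucl ⟨u, rfl⟩ hs₀W' huset
        have hNT : Γ.neighborSet T ∩ ({u} : Set V) = ∅ := by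
          ext x
          simp only [Set.mem_inter_iff, Set.mem_singleton_iff, Set.mem_empty_iff_false,
            iff_false, not_and]
          rintro hx rfl
          exact hunadj (Γ.adj_symm hx)
        have h2 : slW Γ W ({u} : Set V) {T} := by
          refine ⟨⟨T, ?_, ?_, ?_⟩, Set.singleton_subset_iff.2 (Finset.mem_coe.2 hTW)⟩
          · simpa using (Ne.symm hune)
          · intro w hw
            rw [hNT] at hw
            exact absurd hw (Set.notMem_empty w)
          · rw [hNT]
            exact (LawfulSingleton.insert_empty_eq T).symm
        have h3 : Relation.ReflTransGen (slW Γ W) {T} t := by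
          refine build ht htW (t \ {T}).ncard {T} le_rfl
            (Set.singleton_subset_iff.2 hTt) ?_
          intro a ha b hb hbr
          rcases ha with rfl
          have hbT : b ≠ T := fun h => hbr (h ▸ rfl)
          exact lt_of_le_of_ne (W.le_max' _ (htW hb)) hbT
        exact (hreach.trans (hmono h1)).trans (Relation.ReflTransGen.head h2 h3)
      · have htW' : t ⊆ ↑W' := fun x hx =>
          Finset.mem_coe.2 (Finset.mem_erase.2
            ⟨fun h => hTt (h ▸ hx), Finset.mem_coe.1 (htW hx)⟩)
        exact hreach.trans (hmono (ih W' hW'ss hdc' s₀ t hs₀cl hs₀ne ht htne hs₀W' htW'))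

end ShortlexSC

theorem shortlex_strongly_connected
    {V : Type*} [Fintype V] (Γ : SimpleGraph V) (hconn : Γᶜ.Connected) :
    ∃ lo : LinearOrder V,
      ∀ s t : Set V, Γ.IsClique s → s.Nonempty → Γ.IsClique t → t.Nonempty →
        Relation.ReflTransGen (slTrans Γ lo) s t := by
  rcases isEmpty_or_nonempty V with hVe | hVne
  · refine ⟨LinearOrder.lift' (Fintype.equivFin V) (Fintype.equivFin V).injective, ?_⟩
    intro s t _ hsne _ _
    exact (hVe.false hsne.choose).elim
  · classical
    set r : V := Classical.arbitrary V with hr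
    set e := Fintype.equivFin V with he
    set f : V → ℕ ×ₗ Fin (Fintype.card V) := fun v => toLex (Γᶜ.dist r v, e v) with hf
    have hinj : Function.Injective f := by
      intro a b hab
      have h2 := congrArg (fun x => (ofLex x).2) hab
      exact e.injective h2
    letI lo : LinearOrder V := LinearOrder.lift' f hinj
    have hltiff : ∀ a b : V, lo.lt a b ↔
        (Γᶜ.dist r a < Γᶜ.dist r b ∨ (Γᶜ.dist r a = Γᶜ.dist r b ∧ e a < e b)) := by
      intro a b
      exact Prod.Lex.lt_iff
    have hord : ShortlexSC.OrdOK Γ := by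
      intro v hv
      by_cases hvr : v = r
      · exfalso
        obtain ⟨w, hw⟩ := hv
        rw [hvr] at hw
        rcases (hltiff w r).mp hw with h | ⟨h1, h2⟩
        · rw [SimpleGraph.dist_self] at h
          omega
        · rw [SimpleGraph.dist_self] at h1
          have hrw : r = w := (hconn.dist_eq_zero_iff).mp h1
          rw [hrw] at h2
          exact lt_irrefl _ h2
      · have hreach : Γᶜ.Reachable v r := hconn.preconnected v r
        obtain ⟨p, hp⟩ := hreach.exists_walk_length_eq_dist
        cases p with
        | nil => exact absurd rfl hvr
        | cons hadj q =>
          rename_i x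
          refine ⟨x, ?_, ?_, ?_⟩
          · -- x < v since dist r x < dist r v
            have hdx : Γᶜ.dist r x ≤ q.reverse.length := SimpleGraph.dist_le _
            have hql : q.reverse.length = q.length := SimpleGraph.Walk.length_reverse _
            have hlen : q.length + 1 = Γᶜ.dist v r := by
              simpa [SimpleGraph.Walk.length_cons] using hp
            have hcomm : Γᶜ.dist v r = Γᶜ.dist r v := SimpleGraph.dist_comm
            have hvr0 : Γᶜ.dist r v ≠ 0 := fun h => hvr ((hconn.dist_eq_zero_iff).mp h).symm
            refine (hltiff x v).mpr (Or.inl ?_)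
            omega
          · intro h
            exact ((Γ.compl_adj v x).mp hadj).2 (Γ.adj_symm h)
          · intro h
            exact ((Γ.compl_adj v x).mp hadj).1 h.symm
    refine ⟨lo, ?_⟩
    intro s t hs hsne ht htne
    have h := ShortlexSC.main hord Finset.univ (by simp) s t hs hsne ht htne
      (by simp) (by simp)
    exact Relation.ReflTransGen.mono (fun a b hab => hab.1) _ _ h
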